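/- Semantic normal form for the reflexive transitive closure of a finite union of rectangles: let R = ⋃_{i ∈ I} (Eᵢ × Fᵢ) with I finite. Then (x,y) ∈ R* iff x = y, or there exists a finite nonempty sequence s = (s₁,…,sₖ) of elements of I such that x ∈ E_{s₁}, y ∈ F_{sₖ}, and for each 2 ≤ j ≤ k the set F_{s_{j-1}} ∩ E_{s_j} is nonempty. -/

import Mathlib

/-- Semantic normal form for the reflexive transitive closure of a finite union of
rectangles: `(x,y) ∈ R*` iff `x = y` or there is a nonempty sequence `s` of indices
with `x ∈ E s₁`, `y ∈ F s_k`, and consecutive overlaps `F s_{j-1} ∩ E s_j ≠ ∅`. -/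
theorem rtc_union_rectangles_normal_form {W : Type*} {ι : Type*} [Finite ι]
    (E F : ι → Set W) (x y : W) :
    Relation.ReflTransGen (fun a b => ∃ i, a ∈ E i ∧ b ∈ F i) x y ↔
      x = y ∨ ∃ (s : List ι) (h : s ≠ []),
        x ∈ E (s.head h) ∧ y ∈ F (s.getLast h) ∧
        s.Chain' (fun a b => (F a ∩ E b).Nonempty) := by
  constructor
  · intro h
    induction h with
    | refl => exact Or.inl rfl
    | tail _ hbc ih =>
      obtain ⟨i, hbE, hcF⟩ := hbc
      rcases ih with rfl | ⟨s, hs, hxE, hbF, hch⟩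
      · exact Or.inr ⟨[i], by simp, hbE, hcF, List.isChain_singleton i⟩
      · refine Or.inr ⟨s ++ [i], by simp, ?_, ?_, ?_⟩
        · rwa [List.head_append_of_ne_nil hs]
        · simpa using hcF
        · show List.IsChain _ _; rw [List.isChain_append]
          refine ⟨hch, List.isChain_singleton i, ?_⟩
          intro a ha b hb
          simp at hb
          subst hb
          rw [List.getLast?_eq_getLast hs] at ha
          cases ha
          exact ⟨_, hbF, hbE⟩
  · rintro (rfl | ⟨s, hs, hxE, hyF, hch⟩)
    · exact Relation.ReflTransGen.refl
    · induction s generalizing x with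
      | nil => exact absurd rfl hs
      | cons i t ih =>
        cases t with
        | nil =>
          exact Relation.ReflTransGen.single ⟨i, hxE, by simpa using hyF⟩
        | cons j u =>
          have hch' := List.isChain_cons_cons.mp hch
          obtain ⟨z, hzF, hzE⟩ := hch'.1
          exact Relation.ReflTransGen.head ⟨i, hxE, hzF⟩
            (ih z (List.cons_ne_nil _ _) hzE (by simpa using hyF) hch'.2)
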